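/- Let f : H → ℝ be a weakly lower semicontinuous convex function with nonempty sublevel set S := {x ∈ H : f(x) ≤ 0}, and for each x with f(x) > 0 choose g(x) ∈ ∂f(x). Define the subgradient projection P_f by P_f(x) := x − (f(x)/‖g(x)‖²) g(x) if f(x) > 0 and P_f(x) := x otherwise. Then P_f is a cutter and Fix P_f = S. -/

import Mathlib

/-- `T` is a cutter. -/
def IsCutter {H : Type*} [NormedAddCommGroup H] [InnerProductSpace ℝ H]
    (T : H → H) : Prop :=
  ∀ x : H, ∀ z ∈ Function.fixedPoints T, inner ℝ (z - T x) (x - T x) ≤ (0 : ℝ)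

theorem stmt11 {H : Type*} [NormedAddCommGroup H] [InnerProductSpace ℝ H]
    (f : H → ℝ) (hconv : ConvexOn ℝ Set.univ f)
    (hwlsc : LowerSemicontinuous fun x : WeakSpace ℝ H => f x)
    (hS : {x : H | f x ≤ 0}.Nonempty)
    (g : H → H) (hg : ∀ x y : H, f y ≥ f x + inner ℝ (g x) (y - x)) :
    IsCutter (fun x => if f x > 0 then x - (f x / ‖g x‖ ^ 2) • g x else x) ∧
      Function.fixedPoints (fun x => if f x > 0 then x - (f x / ‖g x‖ ^ 2) • g x else x) =
        {x : H | f x ≤ 0} := by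
  obtain ⟨w, hw⟩ := hS
  have hgne : ∀ x : H, f x > 0 → g x ≠ 0 := by
    intro x hx h0
    have := hg x w
    rw [h0] at this
    simp at this
    have hw' : f w ≤ 0 := hw
    linarith
  have hfix : Function.fixedPoints (fun x => if f x > 0 then x - (f x / ‖g x‖ ^ 2) • g x else x)
      = {x : H | f x ≤ 0} := by
    ext x
    simp only [Function.mem_fixedPoints, Function.IsFixedPt, Set.mem_setOf_eq]
    by_cases hx : f x > 0
    · simp only [if_pos hx]
      constructor
      · intro h
        exfalso
        have h1 : (f x / ‖g x‖ ^ 2) • g x = 0 := by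
          have := sub_eq_self.mp h
          exact this
        have hgx := hgne x hx
        have hng : (0:ℝ) < ‖g x‖ ^ 2 := pow_pos (norm_pos_iff.mpr hgx) 2
        have hc : f x / ‖g x‖ ^ 2 ≠ 0 := div_ne_zero (ne_of_gt hx) (ne_of_gt hng)
        exact smul_ne_zero hc hgx h1
      · intro h; linarith
    · simp only [if_neg hx]
      simpa using le_of_not_gt hx
  refine ⟨?_, hfix⟩
  intro x z hz
  rw [hfix] at hz
  by_cases hx : f x > 0
  · simp only [if_pos hx]
    have hgx := hgne x hx
    have hng : (0:ℝ) < ‖g x‖ ^ 2 := pow_pos (norm_pos_iff.mpr hgx) 2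
    set c : ℝ := f x / ‖g x‖ ^ 2 with hc
    have hsub : (inner ℝ (g x) (z - x) : ℝ) ≤ f z - f x := by
      have := hg x z; linarith
    have expand : (inner ℝ (z - (x - c • g x)) (x - (x - c • g x)) : ℝ)
        = c * inner ℝ (g x) (z - x) + c ^ 2 * ‖g x‖ ^ 2 := by
      have : z - (x - c • g x) = (z - x) + c • g x := by abel
      rw [this]
      simp [inner_add_left, inner_smul_left, inner_smul_right, real_inner_self_eq_norm_sq,
        real_inner_comm (z - x) (g x)]
      ring
    rw [expand]
    have hcpos : 0 < c := div_pos hx hng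
    have hc2 : c ^ 2 * ‖g x‖ ^ 2 = c * f x := by
      rw [hc]; field_simp
    have hz' : f z ≤ 0 := hz
    nlinarith
  · simp only [if_neg hx]
    simp
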